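/- Let H_A, H_C be Hilbert spaces, X ∈ B(H_A, H_C), let Q be the orthogonal projection of H_A ⊕ H_C onto the graph subspace G(X) = { x ⊕ X x : x ∈ H_A }, and let P be the orthogonal projection onto H_A ⊕ {0}. Define the operator angle Θ = arcsin √(I - P_A Q P_A*), where P_A : H_A ⊕ H_C → H_A is the canonical projection. Then tan Θ = √(X*X); in particular ‖tan Θ‖ = ‖X‖, and ‖sin Θ‖ = ‖Q - P‖. -/

import Mathlib

open Real in
lemma aux_h_mem {t : ℝ} (ht : 0 ≤ t) : 0 ≤ 1 - (1+t)⁻¹ ∧ 1 - (1+t)⁻¹ < 1 := by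
  have h1 : (0:ℝ) < 1 + t := by linarith
  constructor
  · have : (1+t)⁻¹ ≤ 1 := by rw [inv_le_one_iff₀]; right; linarith
    linarith
  · have : 0 < (1+t)⁻¹ := by positivity
    linarith

open Real in
lemma aux_tan {t : ℝ} (ht : 0 ≤ t) :
    Real.tan (Real.arcsin (Real.sqrt (1 - (1+t)⁻¹))) = Real.sqrt t := by
  have h1 : (0:ℝ) < 1 + t := by linarith
  obtain ⟨hh0, hh1⟩ := aux_h_mem ht
  rw [Real.tan_arcsin, Real.sq_sqrt hh0, sub_sub_cancel]
  rw [show (1 - (1+t)⁻¹ : ℝ) = t * (1+t)⁻¹ by field_simp; ring]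
  rw [Real.sqrt_mul ht, mul_div_assoc, div_self (by positivity), mul_one]

set_option maxHeartbeats 1000000 in
open ContinuousLinearMap in
/-- Operator angle between `H_A ⊕ {0}` and the graph subspace `G(X)`:
with `Θ = arcsin √(I - P_A Q P_A*)` (defined via the continuous functional calculus),
one has `tan Θ = √(X*X)`, `‖tan Θ‖ = ‖X‖`, and `‖sin Θ‖ = ‖Q - P‖`. -/
theorem operator_angle_tan_sin
    {HA HC : Type*} [NormedAddCommGroup HA] [InnerProductSpace ℂ HA] [CompleteSpace HA]
    [NormedAddCommGroup HC] [InnerProductSpace ℂ HC] [CompleteSpace HC]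
    (X : HA →L[ℂ] HC)
    (G : Submodule ℂ (WithLp 2 (HA × HC)))
    (hG : ∀ z, z ∈ G ↔ ∃ x : HA, z = (WithLp.equiv 2 (HA × HC)).symm (x, X x))
    -- `Q` is the orthogonal projection onto the graph subspace `G(X)`
    (Q : WithLp 2 (HA × HC) →L[ℂ] WithLp 2 (HA × HC))
    (hQsa : IsSelfAdjoint Q) (hQproj : Q ∘L Q = Q) (hQran : Set.range Q = (G : Set _))
    -- `P` is the orthogonal projection onto `H_A ⊕ {0}`
    (P : WithLp 2 (HA × HC) →L[ℂ] WithLp 2 (HA × HC))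
    (hP : ∀ (x : HA) (y : HC),
      P ((WithLp.equiv 2 (HA × HC)).symm (x, y)) = (WithLp.equiv 2 (HA × HC)).symm (x, 0))
    -- `PA` is the canonical projection onto `H_A`
    (PA : WithLp 2 (HA × HC) →L[ℂ] HA)
    (hPA : ∀ (x : HA) (y : HC), PA ((WithLp.equiv 2 (HA × HC)).symm (x, y)) = x)
    -- the operator angle `Θ = arcsin √(I - P_A Q P_A*)`
    (Theta : HA →L[ℂ] HA)
    (hTheta : Theta = cfc Real.arcsin
      (cfc Real.sqrt (1 - PA ∘L Q ∘L ContinuousLinearMap.adjoint PA))) :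
    cfc Real.tan Theta = cfc Real.sqrt (ContinuousLinearMap.adjoint X ∘L X) ∧
      ‖cfc Real.tan Theta‖ = ‖X‖ ∧
      ‖cfc Real.sin Theta‖ = ‖Q - P‖ := by
  set em := (WithLp.equiv 2 (HA × HC)).symm with hem
  -- basic facts about elements of WithLp 2 (HA × HC)
  have hfst : ∀ (x : HA) (y : HC), (em (x, y)).fst = x := fun x y => rfl
  have hsnd : ∀ (x : HA) (y : HC), (em (x, y)).snd = y := fun x y => rfl
  have heta : ∀ z : WithLp 2 (HA × HC), em (z.fst, z.snd) = z := fun z => rfl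
  -- T = X* X
  set T := adjoint X ∘L X with hT
  have hTpos : T.IsPositive := by
    refine isPositive_def'.mpr ⟨?_, ?_⟩
    · rw [IsSelfAdjoint, hT, star_eq_adjoint, adjoint_comp, adjoint_adjoint]
    · intro x
      rw [reApplyInnerSelf_apply, hT]
      simp only [comp_apply, adjoint_inner_left]
      rw [inner_self_eq_norm_sq (𝕜 := ℂ)]
      positivity
  have hTsa : IsSelfAdjoint T := hTpos.isSelfAdjoint
  have hspecT : ∀ t ∈ spectrum ℝ T, 0 ≤ t :=
    fun t ht => spectrum_nonneg_of_nonneg ((nonneg_iff_isPositive T).mpr hTpos) ht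
  -- scalar functions
  set g : ℝ → ℝ := fun t => (1 + t)⁻¹ with hg
  set h : ℝ → ℝ := fun t => 1 - (1 + t)⁻¹ with hh
  have hgc : ContinuousOn g (spectrum ℝ T) := by
    apply ContinuousOn.inv₀ (by fun_prop)
    intro t ht
    have := hspecT t ht
    positivity
  have hhc : ContinuousOn h (spectrum ℝ T) := continuousOn_const.sub hgc
  -- R = (1 + T)⁻¹ via cfc
  set R := cfc g T with hR
  have hRsa : IsSelfAdjoint R := cfc_predicate g T
  have hRmul : R * (1 + T) = 1 := by
    have h1 : (1 : HA →L[ℂ] HA) + T = cfc (fun t : ℝ => 1 + t) T := by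
      rw [cfc_const_add 1 (fun t : ℝ => t) T (by fun_prop), cfc_id' ℝ T]
      simp
    rw [hR, h1, ← cfc_mul g _ T hgc (by fun_prop)]
    have h2 : cfc (fun t => g t * (1 + t)) T = cfc (fun _ : ℝ => (1:ℝ)) T := by
      apply cfc_congr
      intro t ht
      have := hspecT t ht
      simp only [hg]
      field_simp
    rw [h2, cfc_const_one ℝ T]
  have hRapp : ∀ u : HA, R (u + T u) = u := by
    intro u
    have := congrArg (fun (W : HA →L[ℂ] HA) => W u) hRmul
    simpa [mul_apply] using this
  -- Q pointwise
  have hQmem : ∀ z, ∃ a : HA, Q z = em (a, X a) := by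
    intro z
    have : Q z ∈ G := by
      rw [← SetLike.mem_coe, ← hQran]; exact Set.mem_range_self z
    exact (hG _).mp this
  have hQfix : ∀ w ∈ G, Q w = w := by
    intro w hw
    rw [← SetLike.mem_coe, ← hQran] at hw
    obtain ⟨v, rfl⟩ := hw
    exact congrFun (congrArg DFunLike.coe hQproj) v
  have hQapply : ∀ z, Q z = em (R (z.fst + adjoint X z.snd), X (R (z.fst + adjoint X z.snd))) := by
    intro z
    obtain ⟨a, ha⟩ := hQmem z
    have horth : ∀ v : HA, (inner ℂ (z - Q z) (em (v, X v)) : ℂ) = 0 := by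
      intro v
      have hvG : em (v, X v) ∈ G := (hG _).mpr ⟨v, rfl⟩
      have hq0 : Q (z - Q z) = 0 := by
        rw [map_sub, show Q (Q z) = Q z from congrFun (congrArg DFunLike.coe hQproj) z, sub_self]
      calc (inner ℂ (z - Q z) (em (v, X v)) : ℂ)
          = inner ℂ (z - Q z) (Q (em (v, X v))) := by rw [hQfix _ hvG]
        _ = inner ℂ (adjoint Q (z - Q z)) (em (v, X v)) := (adjoint_inner_left Q _ _).symm
        _ = 0 := by rw [hQsa.adjoint_eq, hq0, inner_zero_left]
    have hker : (z.fst - a) + adjoint X (z.snd - X a) = 0 := by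
      set v0 := (z.fst - a) + adjoint X (z.snd - X a) with hv0
      have h0 := horth v0
      rw [WithLp.prod_inner_apply] at h0
      simp only [WithLp.ofLp_fst, WithLp.ofLp_snd, WithLp.sub_fst, WithLp.sub_snd, ha, hfst, hsnd] at h0
      rw [show (inner ℂ (z.snd - X a) (X v0) : ℂ) = inner ℂ (adjoint X (z.snd - X a)) v0 from
        (adjoint_inner_left X v0 (z.snd - X a)).symm] at h0
      rw [← inner_add_left] at h0
      exact inner_self_eq_zero.mp h0
    have hXa : z.fst + adjoint X z.snd = a + T a := by
      have h2 : (z.fst - a) + (adjoint X z.snd - adjoint X (X a)) = 0 := by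
        rw [← map_sub]; exact hker
      have h3 : adjoint X (X a) = T a := rfl
      rw [h3] at h2
      have h4 : z.fst + adjoint X z.snd = ((z.fst - a) + (adjoint X z.snd - T a)) + (a + T a) := by
        abel
      rw [h4, h2, zero_add]
    have haR : R (z.fst + adjoint X z.snd) = a := by rw [hXa]; exact hRapp a
    rw [ha, haR]
  -- adjoint of PA
  have hPAapp : ∀ z, PA z = z.fst := by
    intro z
    conv_lhs => rw [← heta z]
    rw [hPA]
  set J : HA →L[ℂ] WithLp 2 (HA × HC) :=
    (WithLp.prodContinuousLinearEquiv 2 ℂ HA HC).symm.toContinuousLinearMap ∘L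
      ContinuousLinearMap.inl ℂ HA HC with hJ
  have hJapp : ∀ x, J x = em (x, 0) := fun x => rfl
  have hPAadj : adjoint PA = J := by
    symm
    rw [eq_adjoint_iff]
    intro x z
    rw [hJapp, hPAapp, WithLp.prod_inner_apply, WithLp.ofLp_fst, WithLp.ofLp_snd, hfst, hsnd, inner_zero_left, add_zero]
    rfl
  have hPQJ : PA ∘L Q ∘L adjoint PA = R := by
    ext x
    simp only [comp_apply, hPAadj, hJapp, hQapply, hPAapp, hfst, hsnd, map_zero, add_zero]
  -- S = 1 - R
  set S := cfc h T with hS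
  have hSsa : IsSelfAdjoint S := cfc_predicate h T
  have h1R : S = 1 - R := by
    rw [hS, hR, show h = fun t => (fun _ : ℝ => (1:ℝ)) t - g t from rfl,
      cfc_sub _ _ T continuousOn_const hgc, cfc_const_one ℝ T]
  -- rewrite Theta as a single cfc of T
  have hhT : 1 - PA ∘L Q ∘L adjoint PA = S := by rw [hPQJ, h1R]
  have hsqc : ContinuousOn (fun t => Real.sqrt (h t)) (spectrum ℝ T) :=
    Real.continuous_sqrt.comp_continuousOn hhc
  have harcc : ContinuousOn (fun t => Real.arcsin (Real.sqrt (h t))) (spectrum ℝ T) :=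
    Real.continuous_arcsin.comp_continuousOn hsqc
  have hTheta' : Theta = cfc (fun t => Real.arcsin (Real.sqrt (h t))) T := by
    rw [hTheta, hhT, hS,
      ← cfc_comp' Real.sqrt h T (Real.continuous_sqrt.continuousOn) hhc hTsa,
      ← cfc_comp' Real.arcsin (fun t => Real.sqrt (h t)) T
        (Real.continuous_arcsin.continuousOn) hsqc hTsa]
  -- tan
  have htanc : ContinuousOn Real.tan
      ((fun t => Real.arcsin (Real.sqrt (h t))) '' spectrum ℝ T) := by
    intro y hy
    obtain ⟨t, ht, rfl⟩ := hy
    obtain ⟨hh0, hh1⟩ := aux_h_mem (hspecT t ht)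
    have hs1 : Real.sqrt (h t) < 1 := by
      rw [Real.sqrt_lt' one_pos, one_pow]; exact hh1
    have hlt : Real.arcsin (Real.sqrt (h t)) < Real.pi / 2 :=
      Real.arcsin_lt_pi_div_two.mpr hs1
    have hge : (0:ℝ) ≤ Real.arcsin (Real.sqrt (h t)) :=
      Real.arcsin_nonneg.mpr (Real.sqrt_nonneg _)
    have hc : Real.cos (Real.arcsin (Real.sqrt (h t))) ≠ 0 :=
      ne_of_gt (Real.cos_pos_of_mem_Ioo ⟨by linarith [Real.pi_pos], hlt⟩)
    exact (Real.continuousAt_tan.mpr hc).continuousWithinAt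
  have htan : cfc Real.tan Theta = cfc Real.sqrt T := by
    rw [hTheta', ← cfc_comp' Real.tan (fun t => Real.arcsin (Real.sqrt (h t))) T htanc harcc hTsa]
    exact cfc_congr fun t ht => aux_tan (hspecT t ht)
  -- norm of cfc sqrt T
  have hsqrtc : ContinuousOn Real.sqrt (spectrum ℝ T) := Real.continuous_sqrt.continuousOn
  have hAsa : IsSelfAdjoint (cfc Real.sqrt T) := cfc_predicate _ T
  have hsqA : cfc Real.sqrt T * cfc Real.sqrt T = T := by
    rw [← cfc_mul Real.sqrt Real.sqrt T hsqrtc hsqrtc]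
    have h2 : cfc (fun t => Real.sqrt t * Real.sqrt t) T = cfc (fun t : ℝ => t) T :=
      cfc_congr fun t ht => Real.mul_self_sqrt (hspecT t ht)
    rw [h2, cfc_id' ℝ T]
  have hnormA : ‖cfc Real.sqrt T‖ * ‖cfc Real.sqrt T‖ = ‖X‖ * ‖X‖ := by
    rw [← CStarRing.norm_star_mul_self (x := cfc Real.sqrt T), hAsa.star_eq, hsqA, hT]
    exact norm_adjoint_comp_self X
  have hA : ‖cfc Real.sqrt T‖ = ‖X‖ := by
    have h1 : ‖cfc Real.sqrt T‖ ^ 2 = ‖X‖ ^ 2 := by rw [sq, sq, hnormA]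
    have h2 := congrArg Real.sqrt h1
    rwa [Real.sqrt_sq (norm_nonneg _), Real.sqrt_sq (norm_nonneg _)] at h2
  -- sin
  have hsin : cfc Real.sin Theta = cfc (fun t => Real.sqrt (h t)) T := by
    rw [hTheta', ← cfc_comp' Real.sin (fun t => Real.arcsin (Real.sqrt (h t))) T
      (Real.continuous_sin.continuousOn) harcc hTsa]
    refine cfc_congr fun t ht => ?_
    obtain ⟨hh0, hh1⟩ := aux_h_mem (hspecT t ht)
    exact Real.sin_arcsin (le_trans (by norm_num) (Real.sqrt_nonneg _))
      (Real.sqrt_le_one.mpr hh1.le)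
  set B := cfc (fun t => Real.sqrt (h t)) T with hB
  have hBsa : IsSelfAdjoint B := cfc_predicate _ T
  have hBsq : B * B = S := by
    rw [hB, hS, ← cfc_mul _ _ T hsqc hsqc]
    exact cfc_congr fun t ht => Real.mul_self_sqrt (aux_h_mem (hspecT t ht)).1
  have hBnorm : ‖B‖ * ‖B‖ = ‖S‖ := by
    rw [← CStarRing.norm_star_mul_self (x := B), hBsa.star_eq, hBsq]
  -- P pointwise and selfadjoint
  have hPapp : ∀ z, P z = em (z.fst, 0) := by
    intro z
    conv_lhs => rw [← heta z]
    rw [hP]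
  have hPsa : IsSelfAdjoint P := by
    rw [IsSelfAdjoint, star_eq_adjoint]
    refine ((eq_adjoint_iff P P).mpr ?_).symm
    intro z w
    rw [hPapp z, hPapp w, WithLp.prod_inner_apply, WithLp.prod_inner_apply]
    simp only [WithLp.ofLp_fst, WithLp.ofLp_snd, hfst, hsnd, inner_zero_left, inner_zero_right, add_zero]
  have hDsa : IsSelfAdjoint (Q - P) :=
    IsSelfAdjoint.sub (R := WithLp 2 (HA × HC) →L[ℂ] WithLp 2 (HA × HC)) hQsa hPsa
  -- pointwise formula for (Q - P) and its square
  have hDapp : ∀ w : WithLp 2 (HA × HC), (Q - P) w =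
      em (R (w.fst + adjoint X w.snd) - w.fst, X (R (w.fst + adjoint X w.snd))) := by
    intro w
    rw [ContinuousLinearMap.sub_apply, hQapply w, hPapp w]
    apply (WithLp.equiv 2 (HA × HC)).injective
    rw [show ∀ a b : WithLp 2 (HA × HC), WithLp.equiv 2 (HA × HC) (a - b) =
      WithLp.equiv 2 (HA × HC) a - WithLp.equiv 2 (HA × HC) b from fun _ _ => rfl]
    simp only [hem, Equiv.apply_symm_apply]
    ext
    · simp
    · simp
  set M := X ∘L R ∘L adjoint X with hM
  have hDD : ∀ z : WithLp 2 (HA × HC), (Q - P) ((Q - P) z) = em (S z.fst, M z.snd) := by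
    intro z
    set u := R (z.fst + adjoint X z.snd) with hu
    rw [hDapp z, hDapp _]
    simp only [hfst, hsnd]
    have hXu : adjoint X (X u) = T u := rfl
    have hfirst : R ((u - z.fst) + adjoint X (X u)) = u - R z.fst := by
      rw [hXu]
      have h5 : (u - z.fst) + T u = (u + T u) - z.fst := by abel
      rw [h5, map_sub, hRapp u]
    have hu2 : u - R z.fst = R (adjoint X z.snd) := by
      rw [hu, map_add]; abel
    rw [hfirst, hu2]
    have hSz : S z.fst = z.fst - R z.fst := by
      rw [h1R, ContinuousLinearMap.sub_apply, ContinuousLinearMap.one_apply]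
    have hMz : M z.snd = X (R (adjoint X z.snd)) := rfl
    rw [hSz, hMz]
    congr 1
    have : R (adjoint X z.snd) - (R (z.fst + adjoint X z.snd) - z.fst) = z.fst - R z.fst := by
      rw [map_add]; abel
    rw [Prod.mk.injEq]
    exact ⟨this, rfl⟩
  -- norm of M equals norm of S
  have hgspec : ∀ t ∈ spectrum ℝ T, 0 ≤ g t := by
    intro t ht
    have := hspecT t ht
    have h1 : (0:ℝ) < 1 + t := by linarith
    positivity
  set K := cfc (fun t => Real.sqrt (g t)) T with hK
  have hKc : ContinuousOn (fun t => Real.sqrt (g t)) (spectrum ℝ T) :=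
    Real.continuous_sqrt.comp_continuousOn hgc
  have hKsa : IsSelfAdjoint K := cfc_predicate _ T
  have hK2 : K * K = R := by
    rw [hK, hR, ← cfc_mul _ _ T hKc hKc]
    exact cfc_congr fun t ht => Real.mul_self_sqrt (hgspec t ht)
  set C := X ∘L K with hC
  have hCadj : adjoint C = K ∘L adjoint X := by
    rw [hC, adjoint_comp, hKsa.adjoint_eq]
  have hMC : M = C ∘L adjoint C := by
    rw [hCadj, hM, ← hK2]
    ext x
    simp only [hC, comp_apply, mul_apply]
    rfl
  have hCC : adjoint C ∘L C = S := by
    have h6 : adjoint C ∘L C = K * (T * K) := by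
      rw [hCadj, hC]
      ext x
      simp only [comp_apply, mul_apply, hT]
      rfl
    rw [h6]
    have h7 : T * K = cfc (fun t => t * Real.sqrt (g t)) T := by
      have h7' := cfc_mul (R := ℝ) (fun t : ℝ => t) (fun t => Real.sqrt (g t)) T
        (continuousOn_id' _) hKc
      rw [cfc_id' ℝ T, ← hK] at h7'
      exact h7'.symm
    rw [h7, hK, ← cfc_mul _ _ T hKc (by
      exact (continuousOn_id' _).mul hKc), hS]
    refine cfc_congr fun t ht => ?_
    have ht0 := hspecT t ht
    have h1 : (0:ℝ) < 1 + t := by linarith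
    have : Real.sqrt (g t) * (t * Real.sqrt (g t)) = t * g t := by
      rw [show Real.sqrt (g t) * (t * Real.sqrt (g t))
          = t * (Real.sqrt (g t) * Real.sqrt (g t)) by ring,
        Real.mul_self_sqrt (hgspec t ht)]
    rw [this, hh, hg]
    field_simp
    ring
  have hCnorm : ‖adjoint C‖ = ‖C‖ := ContinuousLinearMap.adjoint.norm_map C
  have hMnorm : ‖M‖ = ‖S‖ := by
    rw [hMC, ← hCC]
    rw [show C ∘L adjoint C = adjoint (adjoint C) ∘L adjoint C by rw [adjoint_adjoint]]
    rw [norm_adjoint_comp_self (adjoint C), norm_adjoint_comp_self C, hCnorm]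
  -- norms in the L2 product
  have hnz : ∀ z : WithLp 2 (HA × HC), ‖z‖ ^ 2 = ‖z.fst‖ ^ 2 + ‖z.snd‖ ^ 2 :=
    fun z => WithLp.prod_norm_sq_eq_of_L2 z
  have hnem : ∀ (x : HA) (y : HC), ‖em (x, y)‖ ^ 2 = ‖x‖ ^ 2 + ‖y‖ ^ 2 := by
    intro x y
    rw [hnz, hfst, hsnd]
  -- ‖(Q-P) ∘L (Q-P)‖ = ‖S‖
  have sq_le : ∀ a b : ℝ, 0 ≤ a → 0 ≤ b → a ^ 2 ≤ b ^ 2 → a ≤ b := by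
    intro a b ha hb hab
    have h9 := Real.sqrt_le_sqrt hab
    rwa [Real.sqrt_sq ha, Real.sqrt_sq hb] at h9
  have hPA1 : ‖PA‖ ≤ 1 := by
    refine opNorm_le_bound PA zero_le_one fun z => ?_
    rw [one_mul, hPAapp]
    refine sq_le _ _ (norm_nonneg _) (norm_nonneg _) ?_
    rw [hnz]
    exact le_add_of_nonneg_right (by positivity)
  have hJ1 : ‖J‖ ≤ 1 := by
    refine opNorm_le_bound J zero_le_one fun x => ?_
    rw [one_mul, hJapp]
    refine sq_le _ _ (norm_nonneg _) (norm_nonneg _) ?_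
    rw [hnem]
    simp
  have hfact : S = PA ∘L ((Q - P) ∘L (Q - P)) ∘L J := by
    ext x
    simp only [comp_apply, hJapp, hDD, hPAapp, hfst, hsnd, map_zero]
  have hD2norm : ‖(Q - P) ∘L (Q - P)‖ = ‖S‖ := by
    refine le_antisymm ?_ ?_
    · refine opNorm_le_bound _ (norm_nonneg S) fun z => ?_
      refine sq_le _ _ (norm_nonneg _) (by positivity) ?_
      rw [comp_apply, hDD z, hnem, mul_pow, hnz]
      have h10 : ‖S z.fst‖ ≤ ‖S‖ * ‖z.fst‖ := le_opNorm S z.fst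
      have h11 : ‖M z.snd‖ ≤ ‖S‖ * ‖z.snd‖ := by
        rw [← hMnorm]; exact le_opNorm M z.snd
      have e1 : ‖S z.fst‖ ^ 2 ≤ (‖S‖ * ‖z.fst‖) ^ 2 :=
        pow_le_pow_left₀ (norm_nonneg _) h10 2
      have e2 : ‖M z.snd‖ ^ 2 ≤ (‖S‖ * ‖z.snd‖) ^ 2 :=
        pow_le_pow_left₀ (norm_nonneg _) h11 2
      calc ‖S z.fst‖ ^ 2 + ‖M z.snd‖ ^ 2
          ≤ (‖S‖ * ‖z.fst‖) ^ 2 + (‖S‖ * ‖z.snd‖) ^ 2 := add_le_add e1 e2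
        _ = ‖S‖ ^ 2 * (‖z.fst‖ ^ 2 + ‖z.snd‖ ^ 2) := by ring
    · calc ‖S‖ = ‖PA ∘L ((Q - P) ∘L (Q - P)) ∘L J‖ := by rw [← hfact]
        _ ≤ ‖PA‖ * ‖((Q - P) ∘L (Q - P)) ∘L J‖ := opNorm_comp_le _ _
        _ ≤ ‖PA‖ * (‖(Q - P) ∘L (Q - P)‖ * ‖J‖) := by
            have := opNorm_comp_le ((Q - P) ∘L (Q - P)) J
            exact mul_le_mul_of_nonneg_left this (norm_nonneg PA)
        _ ≤ 1 * (‖(Q - P) ∘L (Q - P)‖ * 1) := by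
            have h13 : ‖(Q - P) ∘L (Q - P)‖ * ‖J‖ ≤ ‖(Q - P) ∘L (Q - P)‖ * 1 :=
              mul_le_mul_of_nonneg_left hJ1 (norm_nonneg _)
            exact mul_le_mul hPA1 h13 (by positivity) zero_le_one
        _ = ‖(Q - P) ∘L (Q - P)‖ := by ring
  have hDnorm : ‖Q - P‖ * ‖Q - P‖ = ‖S‖ := by
    rw [← CStarRing.norm_star_mul_self (x := Q - P), hDsa.star_eq,
      show (Q - P) * (Q - P) = (Q - P) ∘L (Q - P) from rfl, hD2norm]
  have hBD : ‖B‖ = ‖Q - P‖ := by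
    have h15 : ‖B‖ ^ 2 = ‖Q - P‖ ^ 2 := by rw [sq, sq, hBnorm, hDnorm]
    have h16 := congrArg Real.sqrt h15
    rwa [Real.sqrt_sq (norm_nonneg _), Real.sqrt_sq (norm_nonneg _)] at h16
  refine ⟨htan, ?_, ?_⟩
  · rw [htan]; exact hA
  · rw [hsin]; exact hBD
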